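/- For every integer n ≥ 1, B(n) = Σ_{k=0}^{⌊(n+1)/2⌋} (2k)!·S(n+1,2k+1). -/

import Mathlib

open Finset

/-- Stirling numbers of the second kind. -/
def S : ℕ → ℕ → ℕ
  | 0, 0 => 1
  | 0, _ + 1 => 0
  | _ + 1, 0 => 0
  | n + 1, k + 1 => (k + 1) * S n (k + 1) + S n k

/-- Ordered Bell (Fubini) numbers. -/
def B (n : ℕ) : ℕ := ∑ k ∈ range (n + 1), k.factorial * S n k

lemma S_eq_zero : ∀ n k : ℕ, n < k → S n k = 0 := by
  intro n
  induction n with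
  | zero => intro k h; match k, h with | k+1, _ => rfl
  | succ m ih =>
    intro k h
    match k, h with
    | k+1, h =>
      have h1 : m < k + 1 := by omega
      have h2 : m < k := by omega
      simp [S, ih _ h1, ih _ h2]

lemma sum_pair (f : ℕ → ℕ) (m : ℕ) :
    ∑ j ∈ range (2 * m), f j = ∑ k ∈ range m, (f (2 * k) + f (2 * k + 1)) := by
  induction m with
  | zero => simp
  | succ p ih =>
    have : 2 * (p + 1) = (2 * p + 1) + 1 := by ring
    rw [this, sum_range_succ, sum_range_succ, ih, sum_range_succ]
    ring

theorem stmt6 (n : ℕ) (hn : 1 ≤ n) :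
    B n = ∑ k ∈ range ((n + 1) / 2 + 1), (2 * k).factorial * S (n + 1) (2 * k + 1) := by
  set m := (n + 1) / 2 with hm
  have key : ∀ k : ℕ, (2 * k).factorial * S (n + 1) (2 * k + 1) =
      (2 * k).factorial * S n (2 * k) + (2 * k + 1).factorial * S n (2 * k + 1) := by
    intro k
    show (2 * k).factorial * ((2 * k + 1) * S n (2 * k + 1) + S n (2 * k)) = _
    rw [Nat.factorial_succ]
    ring
  have hsum : ∑ k ∈ range (m + 1), (2 * k).factorial * S (n + 1) (2 * k + 1) =
      ∑ j ∈ range (2 * (m + 1)), j.factorial * S n j := by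
    rw [sum_pair fun j => j.factorial * S n j]
    exact Finset.sum_congr rfl fun k _ => key k
  rw [hsum, B]
  apply Finset.sum_subset
  · apply Finset.range_subset_range.2; omega
  · intro x _ hx
    have : n < x := by simp at hx; omega
    simp [S_eq_zero n x this]
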